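/- Let T be a d-separation tree for a DAG G. Then for any two distinct nodes C_i, C_j of T, every separator on the path in T between C_i and C_j contains C_i ∩ C_j; in particular, if a vertex u belongs to two nodes of T, it belongs to every separator on the tree path between them. -/

import Mathlib

/-- A directed graph (given by its edge relation) is acyclic. -/
def Acyclic {V : Type*} (E : V → V → Prop) : Prop :=
  ∀ v, ¬ Relation.TransGen E v v

/-- `b` is a collider between consecutive path vertices `a, b, c`:
both edges point into `b`. -/
def Collider {V : Type*} (E : V → V → Prop) (a b c : V) : Prop :=
  E a b ∧ E c b

/-- Descendants of `u` (including `u` itself): reachable by a directed path. -/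
def Desc {V : Type*} (E : V → V → Prop) (u : V) : Set V :=
  {w | Relation.ReflTransGen E u w}

/-- Ancestors of some vertex of `W`, excluding `W` itself: `an(W)`. -/
def anc {V : Type*} (E : V → V → Prop) (W : Set V) : Set V :=
  {x | x ∉ W ∧ ∃ w ∈ W, Relation.TransGen E x w}

/-- `An(W) = W ∪ an(W)`. -/
def Anc {V : Type*} (E : V → V → Prop) (W : Set V) : Set V :=
  W ∪ anc E W

/-- `l` is an (undirected) path from `u` to `v` in the directed graph `E`:
a duplicate-free list of vertices starting at `u`, ending at `v`,
with consecutive vertices joined by an edge (in either direction). -/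
def IsPath {V : Type*} (E : V → V → Prop) (u v : V) (l : List V) : Prop :=
  l.Chain' (fun a b => E a b ∨ E b a) ∧ l.head? = some u ∧ l.getLast? = some v ∧ l.Nodup

/-- The set of intermediate (interior) vertices of a path `l`:
vertices having a predecessor and successor on `l`. -/
def Interior {V : Type*} (l : List V) : Set V :=
  {b | ∃ a c, [a, b, c] <:+: l}

/-- The path `l` is blocked (d-separated) by `S`: it contains a non-collider
vertex in `S`, or a collider vertex `b` such that neither `b` nor any
descendant of `b` is in `S`. -/
def Blocked {V : Type*} (E : V → V → Prop) (l : List V) (S : Set V) : Prop :=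
  ∃ a b c, [a, b, c] <:+: l ∧
    ((¬ Collider E a b c ∧ b ∈ S) ∨ (Collider E a b c ∧ ∀ w ∈ Desc E b, w ∉ S))

/-- `u` and `v` are d-separated by `S`: every path between them is blocked. -/
def DSep {V : Type*} (E : V → V → Prop) (u v : V) (S : Set V) : Prop :=
  ∀ l, IsPath E u v l → Blocked E l S

/-- Sets `A` and `B` are d-separated by `S`. -/
def DSepSet {V : Type*} (E : V → V → Prop) (A B S : Set V) : Prop :=
  ∀ u ∈ A, ∀ v ∈ B, DSep E u v S

/-- The union of the tree nodes in the subtree on the `i`-side after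
removing the tree edge `{i, j}`. -/
def SubtreeVerts {V ι : Type*} (T : SimpleGraph ι) (C : ι → Set V) (i j : ι) : Set V :=
  ⋃ k ∈ {k | (T.deleteEdges {s(i, j)}).Reachable i k}, C k

/-- `T` (with node sets `C`) is a d-separation tree for the DAG `E`:
`T` is a tree, the node sets cover `V`, and for each tree edge the separator
`C i ∩ C j` d-separates the remaining vertices of the two subtrees. -/
def IsDSepTree {V ι : Type*} (E : V → V → Prop) (T : SimpleGraph ι) (C : ι → Set V) : Prop :=
  T.IsTree ∧ (⋃ i, C i) = Set.univ ∧
    ∀ i j, T.Adj i j →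
      DSepSet E (SubtreeVerts T C i j \ (C i ∩ C j))
        (SubtreeVerts T C j i \ (C i ∩ C j)) (C i ∩ C j)

lemma split_walk {ι : Type*} (T : SimpleGraph ι) {i j : ι} (p : T.Walk i j)
    (hp : p.IsPath) (d : T.Dart) (hd : d ∈ p.darts) :
    (T.deleteEdges {s(d.fst, d.snd)}).Reachable i d.fst ∧
      (T.deleteEdges {s(d.fst, d.snd)}).Reachable j d.snd := by
  induction p with
  | nil => simp at hd
  | @cons a k b h q ih =>
    rw [SimpleGraph.Walk.darts_cons, List.mem_cons] at hd
    have hia : a ∉ q.support := by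
      have := hp.support_nodup
      rw [SimpleGraph.Walk.support_cons] at this
      exact (List.nodup_cons.mp this).1
    rcases hd with rfl | hd
    · refine ⟨SimpleGraph.Reachable.refl _, ?_⟩
      have hq : ∀ e ∈ q.edges, e ∉ ({s(a, k)} : Set (Sym2 ι)) := by
        intro e he hmem
        rw [Set.mem_singleton_iff] at hmem
        subst hmem
        exact hia (q.fst_mem_support_of_mem_edges he)
      exact ⟨(q.toDeleteEdges _ hq).reverse⟩
    · obtain ⟨h1, h2⟩ := ih hp.of_cons hd
      refine ⟨SimpleGraph.Reachable.trans ⟨SimpleGraph.Walk.cons ?_ SimpleGraph.Walk.nil⟩ h1, h2⟩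
      rw [SimpleGraph.deleteEdges_adj]
      refine ⟨h, ?_⟩
      rw [Set.mem_singleton_iff]
      intro heq
      have : d.edge ∈ q.edges := List.mem_map_of_mem (f := SimpleGraph.Dart.edge) hd
      rw [show d.edge = s(d.fst, d.snd) from rfl, ← heq] at this
      exact hia (q.fst_mem_support_of_mem_edges this)


/-- for distinct nodes `C i`, `C j` of a d-separation tree, every
separator on the tree path between them contains `C i ∩ C j`; in particular a
vertex lying in both nodes lies in every separator on that path. -/
theorem stmt_9 {V ι : Type*} (E : V → V → Prop) (hG : Acyclic E)
    (T : SimpleGraph ι) (C : ι → Set V) (hT : IsDSepTree E T C) :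
    ∀ i j, i ≠ j → ∀ p : T.Walk i j, p.IsPath →
      ∀ d ∈ p.darts, C i ∩ C j ⊆ C d.fst ∩ C d.snd := by
  intro i j hij p hp d hd u ⟨hui, huj⟩
  by_contra hu
  obtain ⟨h1, h2⟩ := split_walk T p hp d hd
  set a := d.fst; set b := d.snd
  have hadj : T.Adj a b := d.adj
  have hA : u ∈ SubtreeVerts T C a b \ (C a ∩ C b) := by
    refine ⟨Set.mem_biUnion h1.symm hui, hu⟩
  have hB : u ∈ SubtreeVerts T C b a \ (C a ∩ C b) := by
    refine ⟨Set.mem_biUnion ?_ huj, hu⟩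
    rw [Sym2.eq_swap]
    exact h2.symm
  have hblocked := hT.2.2 a b hadj u hA u hB [u] ⟨List.isChain_singleton u, rfl, rfl, by simp⟩
  obtain ⟨x, y, z, hinf, -⟩ := hblocked
  have := hinf.sublist.length_le
  simp at this
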